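/- Under the hypotheses of the previous statement (closed-loop Euler–Lagrange dynamics M(t)q″(t) + C(t)q′(t) = −K_P(q(t) − v) − K_D q′(t), M(t) symmetric with M′(t) = C(t) + C(t)ᵀ, K_P symmetric), assume additionally that K_D is positive semidefinite, i.e., wᵀ K_D w ≥ 0 for all w ∈ (Fin n → ℝ). Then the total energy V(t) = ½ q′(t)ᵀ M(t) q′(t) + ½ (q(t) − v)ᵀ K_P (q(t) − v) is nonincreasing: V(t) ≤ V(s) whenever s ≤ t. In particular V(t) ≤ V(0) for all t ≥ 0, so the total energy available to the prestabilized robot never exceeds its initial value for a constant reference. -/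

import Mathlib

open Matrix

lemma bil_transpose {n : ℕ} (A : Matrix (Fin n) (Fin n) ℝ) (u w : Fin n → ℝ) :
    u ⬝ᵥ A *ᵥ w = w ⬝ᵥ Aᵀ *ᵥ u := by
  rw [dotProduct_mulVec, dotProduct_comm, mulVec_transpose]

lemma bil_symm {n : ℕ} (A : Matrix (Fin n) (Fin n) ℝ) (hA : A.IsSymm)
    (u w : Fin n → ℝ) : u ⬝ᵥ A *ᵥ w = w ⬝ᵥ A *ᵥ u := by
  rw [bil_transpose, hA]

theorem energy_nonincreasing {n : ℕ}
    (q q' q'' : ℝ → (Fin n → ℝ)) (v : Fin n → ℝ)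
    (M M' C : ℝ → Matrix (Fin n) (Fin n) ℝ)
    (K_P K_D : Matrix (Fin n) (Fin n) ℝ)
    (hq : ∀ t, HasDerivAt q (q' t) t)
    (hq' : ∀ t, HasDerivAt q' (q'' t) t)
    (hMsymm : ∀ t, (M t).IsSymm)
    (hKPsymm : K_P.IsSymm)
    (hM : ∀ t, ∀ i j, HasDerivAt (fun s => M s i j) (M' t i j) t)
    (hMdot : ∀ t, M' t = C t + (C t)ᵀ)
    (hdyn : ∀ t, (M t) *ᵥ (q'' t) + (C t) *ᵥ (q' t) =
      -(K_P *ᵥ (q t - v)) - K_D *ᵥ (q' t))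
    (hKD : ∀ w : Fin n → ℝ, 0 ≤ w ⬝ᵥ K_D *ᵥ w)
    (V : ℝ → ℝ)
    (hV : ∀ t, V t = (1/2) * (q' t ⬝ᵥ (M t) *ᵥ (q' t))
      + (1/2) * ((q t - v) ⬝ᵥ K_P *ᵥ (q t - v))) :
    (∀ s t : ℝ, s ≤ t → V t ≤ V s) ∧ (∀ t : ℝ, 0 ≤ t → V t ≤ V 0) := by
  have hVF : V = fun s => (1/2) * (q' s ⬝ᵥ (M s) *ᵥ (q' s))
      + (1/2) * ((q s - v) ⬝ᵥ K_P *ᵥ (q s - v)) := funext hV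
  -- key: derivative of V at t is nonpositive
  have key : ∀ t, HasDerivAt V (-(q' t ⬝ᵥ K_D *ᵥ q' t)) t := by
    intro t
    have hqi : ∀ i, HasDerivAt (fun s => q s i) (q' t i) t := hasDerivAt_pi.mp (hq t)
    have hq'i : ∀ i, HasDerivAt (fun s => q' s i) (q'' t i) t := hasDerivAt_pi.mp (hq' t)
    have h1 : HasDerivAt (fun s => q' s ⬝ᵥ (M s) *ᵥ (q' s))
        (q'' t ⬝ᵥ M t *ᵥ q' t + (q' t ⬝ᵥ M' t *ᵥ q' t + q' t ⬝ᵥ M t *ᵥ q'' t)) t := by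
      have : ∀ s : ℝ, q' s ⬝ᵥ (M s) *ᵥ (q' s)
          = ∑ i, q' s i * ∑ j, M s i j * q' s j := by
        intro s; simp [dotProduct, mulVec]
      rw [show (fun s => q' s ⬝ᵥ (M s) *ᵥ (q' s))
          = fun s => ∑ i, q' s i * ∑ j, M s i j * q' s j from funext this]
      have inner : ∀ i : Fin n, HasDerivAt (fun s => ∑ j, M s i j * q' s j)
          (∑ j, (M' t i j * q' t j + M t i j * q'' t j)) t := by
        intro i
        exact HasDerivAt.fun_sum fun j _ => (hM t i j).fun_mul (hq'i j)
      have main : HasDerivAt (fun s => ∑ i, q' s i * ∑ j, M s i j * q' s j)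
          (∑ i, (q'' t i * ∑ j, M t i j * q' t j
            + q' t i * ∑ j, (M' t i j * q' t j + M t i j * q'' t j))) t :=
        HasDerivAt.fun_sum fun i _ => (hq'i i).fun_mul (inner i)
      convert main using 1
      simp [dotProduct, mulVec, Finset.sum_add_distrib, Finset.mul_sum, mul_add]
    have h2 : HasDerivAt (fun s => (q s - v) ⬝ᵥ K_P *ᵥ (q s - v))
        (q' t ⬝ᵥ K_P *ᵥ (q t - v) + (q t - v) ⬝ᵥ K_P *ᵥ q' t) t := by
      have : ∀ s : ℝ, (q s - v) ⬝ᵥ K_P *ᵥ (q s - v)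
          = ∑ i, (q s i - v i) * ∑ j, K_P i j * (q s j - v j) := by
        intro s; simp [dotProduct, mulVec, Pi.sub_apply]
      rw [show (fun s => (q s - v) ⬝ᵥ K_P *ᵥ (q s - v))
          = fun s => ∑ i, (q s i - v i) * ∑ j, K_P i j * (q s j - v j) from funext this]
      have main : HasDerivAt
          (fun s => ∑ i, (q s i - v i) * ∑ j, K_P i j * (q s j - v j))
          (∑ i, (q' t i * ∑ j, K_P i j * (q t j - v j)
            + (q t i - v i) * ∑ j, K_P i j * q' t j)) t :=
        HasDerivAt.fun_sum fun i _ =>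
          (((hqi i).sub_const (v i)).fun_mul
            (HasDerivAt.fun_sum fun j _ =>
              ((hqi j).sub_const (v j)).const_mul (K_P i j)))
      convert main using 1
      simp [dotProduct, mulVec, Pi.sub_apply, Finset.sum_add_distrib, Finset.mul_sum, mul_add]
    have hsum := ((h1.const_mul (1/2 : ℝ)).fun_add (h2.const_mul (1/2 : ℝ)))
    rw [hVF]
    refine hsum.congr_deriv ?_
    -- scalar identity
    have e1 : q'' t ⬝ᵥ M t *ᵥ q' t = q' t ⬝ᵥ M t *ᵥ q'' t :=
      bil_symm _ (hMsymm t) _ _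
    have e2 : q' t ⬝ᵥ M' t *ᵥ q' t = 2 * (q' t ⬝ᵥ C t *ᵥ q' t) := by
      rw [hMdot t, add_mulVec, dotProduct_add, bil_transpose (C t)ᵀ, transpose_transpose]
      ring
    have e3 : q' t ⬝ᵥ K_P *ᵥ (q t - v) = (q t - v) ⬝ᵥ K_P *ᵥ q' t :=
      bil_symm _ hKPsymm _ _
    have e4 : q' t ⬝ᵥ M t *ᵥ q'' t + q' t ⬝ᵥ C t *ᵥ q' t
        = -(q' t ⬝ᵥ K_P *ᵥ (q t - v)) - q' t ⬝ᵥ K_D *ᵥ q' t := by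
      rw [← dotProduct_add, hdyn t, dotProduct_sub, dotProduct_neg]
    rw [e1, e2, e3]
    nlinarith [e4]
  have hdiff : Differentiable ℝ V := fun t => (key t).differentiableAt
  have hanti : Antitone V := by
    apply antitone_of_deriv_nonpos hdiff
    intro x
    rw [(key x).deriv]
    simpa using hKD (q' x)
  exact ⟨fun s t hst => hanti hst, fun t ht => hanti ht⟩
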